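/- No modal formula has a finite characterization with respect to the full modal language: for every finite set Prop of propositional variables and every formula φ ∈ L_{□,◇,∧,∨,⊤,⊥}[Prop], there is no pair (E⁺, E⁻) of finite sets of finite pointed models that is a finite characterization of φ with respect to L_{□,◇,∧,∨,⊤,⊥}[Prop]. -/
import Mathlib


/-- Modal formulas in negation normal form over propositional variables indexed by `ℕ`.
`var p` is the propositional variable `p`; `nvar p` is the negated literal `¬ p`. -/
inductive MF : Type
  | var  : ℕ → MF
  | nvar : ℕ → MF
  | top  : MF
  | bot  : MF
  | and  : MF → MF → MF
  | or   : MF → MF → MF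
  | dia  : MF → MF
  | box  : MF → MF

/-- Labels for the connectives `∧, ∨, ◇, □, ⊤, ⊥`. -/
inductive Conn : Type
  | conj | disj | dia | box | top | bot

/-- The set of connectives occurring in a modal formula. -/
def MF.conns : MF → Set Conn
  | .var _ => ∅
  | .nvar _ => ∅
  | .top => {Conn.top}
  | .bot => {Conn.bot}
  | .and φ ψ => φ.conns ∪ ψ.conns ∪ {Conn.conj}
  | .or φ ψ => φ.conns ∪ ψ.conns ∪ {Conn.disj}
  | .dia φ => φ.conns ∪ {Conn.dia}
  | .box φ => φ.conns ∪ {Conn.box}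

/-- The set of propositional variables occurring positively (unnegated) in a formula. -/
def MF.pvars : MF → Set ℕ
  | .var p => {p}
  | .nvar _ => ∅
  | .top => ∅
  | .bot => ∅
  | .and φ ψ => φ.pvars ∪ ψ.pvars
  | .or φ ψ => φ.pvars ∪ ψ.pvars
  | .dia φ => φ.pvars
  | .box φ => φ.pvars

/-- The set of propositional variables occurring negatively (negated) in a formula. -/
def MF.nvars : MF → Set ℕ
  | .var _ => ∅
  | .nvar p => {p}
  | .top => ∅
  | .bot => ∅
  | .and φ ψ => φ.nvars ∪ ψ.nvars
  | .or φ ψ => φ.nvars ∪ ψ.nvars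
  | .dia φ => φ.nvars
  | .box φ => φ.nvars

/-- The set of propositional variables occurring in a formula. -/
def MF.vars (φ : MF) : Set ℕ := φ.pvars ∪ φ.nvars

/-- `φ ∈ L_C[P]`: the formula `φ` (in negation normal form, built from literals) uses only
connectives from `C` and variables from `P`. -/
def inLang (C : Set Conn) (P : Set ℕ) (φ : MF) : Prop := φ.conns ⊆ C ∧ φ.vars ⊆ P

/-- A formula is positive if no propositional variable occurs negated in it. -/
def Positive (φ : MF) : Prop := φ.nvars = ∅

/-- A formula is negative if every propositional variable occurs only negated in it. -/
def Negative (φ : MF) : Prop := φ.pvars = ∅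

/-- `φ ∈ L⁺_C[P]`: positive fragment. -/
def inPosLang (C : Set Conn) (P : Set ℕ) (φ : MF) : Prop := inLang C P φ ∧ Positive φ

/-- `φ ∈ L⁻_C[P]`: negative fragment. -/
def inNegLang (C : Set Conn) (P : Set ℕ) (φ : MF) : Prop := inLang C P φ ∧ Negative φ

/-- A Kripke model: a set of worlds, an accessibility relation, and a valuation. -/
structure KModel : Type 1 where
  W : Type
  R : W → W → Prop
  V : ℕ → Set W

/-- A pointed Kripke model. -/
structure PModel : Type 1 where
  M : KModel
  s : M.W

/-- Satisfaction of a modal formula at a world of a Kripke model. -/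
def KModel.sat (M : KModel) : M.W → MF → Prop
  | s, .var p => s ∈ M.V p
  | s, .nvar p => s ∉ M.V p
  | _, .top => True
  | _, .bot => False
  | s, .and φ ψ => M.sat s φ ∧ M.sat s ψ
  | s, .or φ ψ => M.sat s φ ∨ M.sat s ψ
  | s, .dia φ => ∃ t, M.R s t ∧ M.sat t φ
  | s, .box φ => ∀ t, M.R s t → M.sat t φ

/-- Satisfaction in a pointed model. -/
def PModel.sat (e : PModel) (φ : MF) : Prop := e.M.sat e.s φ

/-- A pointed model is finite if its set of worlds is finite. -/
def PModel.finite (e : PModel) : Prop := Finite e.M.W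

/-- `φ` fits the pair of example sets `(Epos, Eneg)`. -/
def Fits (φ : MF) (Epos Eneg : Set PModel) : Prop :=
  (∀ e ∈ Epos, e.sat φ) ∧ (∀ e ∈ Eneg, ¬ e.sat φ)

/-- Semantic equivalence of modal formulas. -/
def EquivF (φ ψ : MF) : Prop := ∀ e : PModel, e.sat φ ↔ e.sat ψ

/-- Semantic entailment of modal formulas. -/
def Entails (φ ψ : MF) : Prop := ∀ e : PModel, e.sat φ → e.sat ψ

/-- `(Epos, Eneg)` is a finite characterization of `φ` with respect to the set `L` of
formulas: both sets are finite, consist of finite pointed models, `φ` fits them, and every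
`ψ ∈ L` fitting them is semantically equivalent to `φ`. -/
def FinChar (L : Set MF) (φ : MF) (Epos Eneg : Set PModel) : Prop :=
  Epos.Finite ∧ Eneg.Finite ∧
  (∀ e ∈ Epos, e.finite) ∧ (∀ e ∈ Eneg, e.finite) ∧
  Fits φ Epos Eneg ∧
  ∀ ψ ∈ L, Fits ψ Epos Eneg → EquivF φ ψ

namespace NoFinCharAux

/-- `◇^k ⊤` -/
def diaIter : ℕ → MF
  | 0 => .top
  | k+1 => .dia (diaIter k)

/-- `□^k ⊥` -/
def boxBotIter : ℕ → MF
  | 0 => .bot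
  | k+1 => .box (boxBotIter k)

lemma sat_boxBotIter (M : KModel) (k : ℕ) : ∀ s : M.W,
    M.sat s (boxBotIter k) ↔ ¬ M.sat s (diaIter k) := by
  induction k with
  | zero => intro s; simp [boxBotIter, diaIter, KModel.sat]
  | succ k ih =>
    intro s
    show (∀ t, M.R s t → M.sat t (boxBotIter k)) ↔ ¬ ∃ t, M.R s t ∧ M.sat t (diaIter k)
    push_neg
    exact forall_congr' fun t => imp_congr Iff.rfl (ih t)

lemma diaIter_down (M : KModel) (k : ℕ) : ∀ s : M.W,
    M.sat s (diaIter (k+1)) → M.sat s (diaIter k) := by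
  induction k with
  | zero => intro s _; trivial
  | succ k ih =>
    rintro s ⟨t, h, ht⟩
    exact ⟨t, h, ih t ht⟩

lemma diaIter_le (M : KModel) {j k : ℕ} (h : j ≤ k) (s : M.W) :
    M.sat s (diaIter k) → M.sat s (diaIter j) := by
  induction h with
  | refl => exact id
  | step _ ih => exact fun hs => ih (diaIter_down M _ s hs)

lemma exists_exact (M : KModel) : ∀ k, ∀ s : M.W, M.sat s (diaIter k) →
    ¬ M.sat s (diaIter (k+1)) →
    ∀ j ≤ k, ∃ t : M.W, M.sat t (diaIter j) ∧ ¬ M.sat t (diaIter (j+1)) := by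
  intro k
  induction k with
  | zero =>
    intro s h1 h2 j hj
    interval_cases j
    exact ⟨s, h1, h2⟩
  | succ k ih =>
    intro s h1 h2 j hj
    rcases Nat.eq_or_lt_of_le hj with h | h
    · exact ⟨s, h ▸ h1, h ▸ h2⟩
    · obtain ⟨t, hR, ht⟩ := h1
      have ht2 : ¬ M.sat t (diaIter (k+1)) := fun htk => h2 ⟨t, hR, htk⟩
      exact ih t ht ht2 j (Nat.lt_succ_iff.mp h)

lemma pump (M : KModel) [Finite M.W] (n : ℕ) (hn : Nat.card M.W ≤ n)
    (s : M.W) (h : M.sat s (diaIter n)) : M.sat s (diaIter (n+1)) := by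
  by_contra h2
  have H := exists_exact M n s h h2
  choose f hf1 hf2 using fun j : Fin (n+1) => H j (Nat.lt_succ_iff.mp j.isLt)
  have key : ∀ a b : Fin (n+1), a < b → f a ≠ f b := by
    intro a b hlt heq
    have hb := diaIter_le M (show (a:ℕ)+1 ≤ (b:ℕ) from hlt) (f b) (hf1 b)
    rw [← heq] at hb
    exact hf2 a hb
  have hinj : Function.Injective f := by
    intro a b hab
    rcases lt_trichotomy a b with h | h | h
    · exact absurd hab (key a b h)
    · exact h
    · exact absurd hab.symm (key b a h)
  have := Nat.card_le_card_of_injective f hinj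
  simp [Nat.card_eq_fintype_card] at this
  omega

lemma diaIter_pvars (k : ℕ) : (diaIter k).pvars = ∅ := by
  induction k with
  | zero => rfl
  | succ k ih => simpa [diaIter, MF.pvars] using ih

lemma diaIter_nvars (k : ℕ) : (diaIter k).nvars = ∅ := by
  induction k with
  | zero => rfl
  | succ k ih => simpa [diaIter, MF.nvars] using ih

lemma boxBotIter_pvars (k : ℕ) : (boxBotIter k).pvars = ∅ := by
  induction k with
  | zero => rfl
  | succ k ih => simpa [boxBotIter, MF.pvars] using ih

lemma boxBotIter_nvars (k : ℕ) : (boxBotIter k).nvars = ∅ := by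
  induction k with
  | zero => rfl
  | succ k ih => simpa [boxBotIter, MF.nvars] using ih

/-- Chain model of length `n` on ℕ. -/
def chain (n : ℕ) : KModel := ⟨ℕ, fun a b => b = a + 1 ∧ a < n, fun _ => ∅⟩

lemma chain_sat (n : ℕ) : ∀ k m, m + k ≤ n → (chain n).sat m (diaIter k) := by
  intro k
  induction k with
  | zero => intro m _; trivial
  | succ k ih =>
    intro m hm
    exact ⟨m + 1, ⟨rfl, by omega⟩, ih (m+1) (by omega)⟩

lemma chain_not (n : ℕ) : ∀ k m, m ≤ n → (chain n).sat m (diaIter k) → m + k ≤ n := by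
  intro k
  induction k with
  | zero => intro m hm _; omega
  | succ k ih =>
    rintro m hm ⟨t, ⟨ht1, ht2⟩, hsat⟩
    have := ih t (by omega) hsat
    omega

end NoFinCharAux


/-- No modal formula has a finite characterization with respect to the full
modal language: for every finite set `P` of propositional variables and every formula
`φ ∈ L_{□,◇,∧,∨,⊤,⊥}[P]`, no pair of finite sets of finite pointed models is a finite
characterization of `φ` with respect to `L_{□,◇,∧,∨,⊤,⊥}[P]`. -/
theorem no_formula_has_finite_characterization_wrt_full_language
    (P : Set ℕ) (hfin : P.Finite) (φ : MF) (hφ : inLang Set.univ P φ)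
    (Epos Eneg : Set PModel) :
    ¬ FinChar {ψ : MF | inLang Set.univ P ψ} φ Epos Eneg := by
  open NoFinCharAux in
  rintro ⟨hEp, hEn, hfinp, hfinn, ⟨hpos, hneg⟩, hchar⟩
  set n := ((hEp.union hEn).toFinset.sup fun e => Nat.card e.M.W) with hndef
  have hcard : ∀ e ∈ Epos ∪ Eneg, Nat.card e.M.W ≤ n := fun e he =>
    Finset.le_sup (f := fun e => Nat.card e.M.W) ((hEp.union hEn).mem_toFinset.mpr he)
  have hef : ∀ e ∈ Epos ∪ Eneg, Finite e.M.W := by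
    rintro e (he | he)
    · exact hfinp e he
    · exact hfinn e he
  -- γ = ◇^{n+1}⊤ ∨ □^n⊥ holds at every example point
  have hγ : ∀ e ∈ Epos ∪ Eneg, e.sat (MF.or (diaIter (n+1)) (boxBotIter n)) := by
    intro e he
    haveI := hef e he
    by_cases h : e.M.sat e.s (diaIter n)
    · exact Or.inl (pump e.M n (hcard e he) e.s h)
    · exact Or.inr ((sat_boxBotIter e.M n e.s).mpr h)
  -- δ = ◇^n⊤ ∧ □^{n+1}⊥ fails at every example point
  have hδ : ∀ e ∈ Epos ∪ Eneg, ¬ e.sat (MF.and (diaIter n) (boxBotIter (n+1))) := by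
    rintro e he ⟨h1, h2⟩
    haveI := hef e he
    exact (sat_boxBotIter e.M (n+1) e.s).mp h2 (pump e.M n (hcard e he) e.s h1)
  -- the two candidate formulas
  set ψ1 := MF.and φ (MF.or (diaIter (n+1)) (boxBotIter n)) with hψ1
  set ψ2 := MF.or φ (MF.and (diaIter n) (boxBotIter (n+1))) with hψ2
  have hlang : ∀ ψ, MF.vars ψ ⊆ P → inLang Set.univ P ψ :=
    fun ψ hv => ⟨Set.subset_univ _, hv⟩
  have hvφ : MF.vars φ ⊆ P := hφ.2
  have hψ1L : inLang Set.univ P ψ1 := by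
    refine hlang _ ?_
    simp only [hψ1, MF.vars, MF.pvars, MF.nvars, diaIter_pvars, diaIter_nvars,
      boxBotIter_pvars, boxBotIter_nvars, Set.union_empty, Set.empty_union]
    exact hvφ
  have hψ2L : inLang Set.univ P ψ2 := by
    refine hlang _ ?_
    simp only [hψ2, MF.vars, MF.pvars, MF.nvars, diaIter_pvars, diaIter_nvars,
      boxBotIter_pvars, boxBotIter_nvars, Set.union_empty, Set.empty_union]
    exact hvφ
  have hfit1 : Fits ψ1 Epos Eneg := by
    constructor
    · intro e he
      exact ⟨hpos e he, hγ e (Or.inl he)⟩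
    · rintro e he ⟨h1, _⟩
      exact hneg e he h1
  have hfit2 : Fits ψ2 Epos Eneg := by
    constructor
    · intro e he
      exact Or.inl (hpos e he)
    · rintro e he (h | h)
      · exact hneg e he h
      · exact hδ e (Or.inr he) h
  have heq1 := hchar ψ1 hψ1L hfit1
  have heq2 := hchar ψ2 hψ2L hfit2
  -- the chain model of length n refutes the equivalences
  set e0 : PModel := ⟨chain n, (0:ℕ)⟩ with he0
  have hsatn : (chain n).sat (0:ℕ) (diaIter n) := chain_sat n n (0:ℕ) (by omega)
  have hnsat : ¬ (chain n).sat (0:ℕ) (diaIter (n+1)) := fun h => by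
    have := chain_not n (n+1) (0:ℕ) (by omega) h
    omega
  have he0ψ2 : e0.sat ψ2 :=
    Or.inr ⟨hsatn, (sat_boxBotIter (chain n) (n+1) (0:ℕ)).mpr hnsat⟩
  have he0φ : e0.sat φ := (heq2 e0).mpr he0ψ2
  have he0ψ1 : e0.sat ψ1 := (heq1 e0).mp he0φ
  rcases he0ψ1.2 with h | h
  · exact hnsat h
  · exact (sat_boxBotIter (chain n) n (0:ℕ)).mp h hsatn
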